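/- Let n ∈ ℕ, 0 < d ≤ n, and 0 < q < p < ∞. Then there is a constant C > 0 (independent of f) such that for every measurable function f on ℝ^n, ‖f‖_{M^p_q(H^d)} ≤ C ‖f‖_{wL^p(H^d)}. -/

import Mathlib

open MeasureTheory Set ENNReal

noncomputable section

/-- The axis-parallel closed cube with corner `a` and side length `l`. -/
def cubeSet (n : ℕ) (a : Fin n → ℝ) (l : ℝ) : Set (Fin n → ℝ) :=
  {x | ∀ i, a i ≤ x i ∧ x i ≤ a i + l}

/-- The `d`-dimensional Hausdorff content of `E ⊆ ℝⁿ`, defined as the infimum of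
`∑ ℓ(Q_j)^d` over all countable coverings of `E` by axis-parallel cubes. -/
def hContent (n : ℕ) (d : ℝ) (E : Set (Fin n → ℝ)) : ℝ≥0∞ :=
  ⨅ (c : ℕ → (Fin n → ℝ) × ℝ) (_ : E ⊆ ⋃ j, cubeSet n (c j).1 (c j).2),
    ∑' j, ENNReal.ofReal ((c j).2) ^ d

/-- The Choquet integral `∫ g dH^d = ∫_0^∞ H^d({x : g x > t}) dt` of a
nonnegative (`ℝ≥0∞`-valued) function. -/
def choquetIntegral (n : ℕ) (d : ℝ) (g : (Fin n → ℝ) → ℝ≥0∞) : ℝ≥0∞ :=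
  ∫⁻ t in Set.Ioi (0 : ℝ), hContent n d {x | ENNReal.ofReal t < g x}

/-- The Choquet `L^p(H^d)` norm of an `ℝ≥0∞`-valued function. -/
def choquetLpNormE (n : ℕ) (d p : ℝ) (g : (Fin n → ℝ) → ℝ≥0∞) : ℝ≥0∞ :=
  (choquetIntegral n d fun x => g x ^ p) ^ (1 / p)

/-- The Choquet `L^p(H^d)` norm of a real-valued function. -/
def choquetLpNorm (n : ℕ) (d p : ℝ) (f : (Fin n → ℝ) → ℝ) : ℝ≥0∞ :=
  choquetLpNormE n d p fun x => ENNReal.ofReal |f x|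

/-- The weak Choquet `L^p(H^d)` norm of an `ℝ≥0∞`-valued function. -/
def weakNormE (n : ℕ) (d p : ℝ) (g : (Fin n → ℝ) → ℝ≥0∞) : ℝ≥0∞ :=
  ⨆ (t : ℝ) (_ : 0 < t),
    ENNReal.ofReal t * hContent n d {x | ENNReal.ofReal t < g x} ^ (1 / p)

/-- The weak Choquet `L^p(H^d)` norm of a real-valued function. -/
def weakChoquetLpNorm (n : ℕ) (d p : ℝ) (f : (Fin n → ℝ) → ℝ) : ℝ≥0∞ :=
  weakNormE n d p fun x => ENNReal.ofReal |f x|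

/-- The Choquet integral `∫_E |f|^q dH^d` over a set `E`. -/
def choquetSetLq (n : ℕ) (d q : ℝ) (E : Set (Fin n → ℝ)) (f : (Fin n → ℝ) → ℝ) : ℝ≥0∞ :=
  choquetIntegral n d (E.indicator fun x => ENNReal.ofReal |f x| ^ q)

/-- The Choquet–Morrey `𝓜^p_q(H^d)` norm of an `ℝ≥0∞`-valued function. -/
def morreyNormE (n : ℕ) (d p q : ℝ) (g : (Fin n → ℝ) → ℝ≥0∞) : ℝ≥0∞ :=
  ⨆ (a : Fin n → ℝ) (l : ℝ) (_ : 0 < l),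
    ENNReal.ofReal (l ^ (d / p - d / q)) *
      (choquetIntegral n d ((cubeSet n a l).indicator fun x => g x ^ q)) ^ (1 / q)

/-- The Choquet–Morrey `𝓜^p_q(H^d)` norm of a real-valued function. -/
def morreyNorm (n : ℕ) (d p q : ℝ) (f : (Fin n → ℝ) → ℝ) : ℝ≥0∞ :=
  morreyNormE n d p q fun x => ENNReal.ofReal |f x|

/-- The Lorentz `L^{p,r}(H^d)` quasinorm of a real-valued function. -/
def lorentzNorm (n : ℕ) (d p r : ℝ) (f : (Fin n → ℝ) → ℝ) : ℝ≥0∞ :=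
  (∫⁻ t in Set.Ioi (0 : ℝ),
      ((ENNReal.ofReal t) ^ p * hContent n d {x | t < |f x|}) ^ (r / p) *
        (ENNReal.ofReal t)⁻¹) ^ (1 / r)

/-- The fractional maximal operator `M_α` (with values in `ℝ≥0∞`). -/
def fracMaximal (n : ℕ) (α : ℝ) (f : (Fin n → ℝ) → ℝ) (x : Fin n → ℝ) : ℝ≥0∞ :=
  ⨆ (a : Fin n → ℝ) (l : ℝ) (_ : 0 < l) (_ : x ∈ cubeSet n a l),
    ENNReal.ofReal (l ^ (α - (n : ℝ))) * ∫⁻ y in cubeSet n a l, ENNReal.ofReal |f y|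

/-- The Euclidean norm on `Fin n → ℝ`. -/
def euclNorm {n : ℕ} (x : Fin n → ℝ) : ℝ := Real.sqrt (∑ i, x i ^ 2)

/-- The fractional integral operator `I_α`. -/
def fracIntegral (n : ℕ) (α : ℝ) (f : (Fin n → ℝ) → ℝ) (x : Fin n → ℝ) : ℝ :=
  ∫ y, f y / euclNorm (x - y) ^ ((n : ℝ) - α)


/-! ### Auxiliary lemmas -/

section Aux

variable {n : ℕ}

theorem hContent_mono {d : ℝ} {E F : Set (Fin n → ℝ)} (h : E ⊆ F) :
    hContent n d E ≤ hContent n d F :=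
  le_iInf fun c => le_iInf fun hc => iInf_le_of_le c (iInf_le_of_le (h.trans hc) le_rfl)

theorem hContent_cube_le {d : ℝ} (hd : 0 < d) (a : Fin n → ℝ) (l : ℝ) :
    hContent n d (cubeSet n a l) ≤ ENNReal.ofReal l ^ d := by
  set c : ℕ → (Fin n → ℝ) × ℝ := fun j => if j = 0 then (a, l) else (a, -1) with hc
  have hcov : cubeSet n a l ⊆ ⋃ j, cubeSet n (c j).1 (c j).2 := fun x hx =>
    Set.mem_iUnion.2 ⟨0, by simpa [hc] using hx⟩
  have h1 : hContent n d (cubeSet n a l) ≤ ∑' j, ENNReal.ofReal ((c j).2) ^ d :=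
    iInf_le_of_le c (iInf_le_of_le hcov le_rfl)
  refine h1.trans_eq ?_
  rw [tsum_eq_single 0]
  · simp [hc]
  · intro j hj
    have : ENNReal.ofReal (-1 : ℝ) = 0 := by simp
    simp [hc, hj, this, ENNReal.zero_rpow_of_pos hd]

theorem hContent_level_le_weak {d p : ℝ} (hp : 0 < p) (g : (Fin n → ℝ) → ℝ≥0∞) {s : ℝ}
    (hs : 0 < s) :
    hContent n d {x | ENNReal.ofReal s < g x} ≤ (weakNormE n d p g / ENNReal.ofReal s) ^ p := by
  set H := hContent n d {x | ENNReal.ofReal s < g x} with hH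
  have h1 : ENNReal.ofReal s * H ^ (1 / p) ≤ weakNormE n d p g := by
    rw [weakNormE]
    exact le_iSup₂ (f := fun (t : ℝ) (_ : 0 < t) =>
      ENNReal.ofReal t * hContent n d {x | ENNReal.ofReal t < g x} ^ (1 / p)) s hs
  have hs0 : ENNReal.ofReal s ≠ 0 := by simp [hs]
  have h2 : H ^ (1 / p) ≤ weakNormE n d p g / ENNReal.ofReal s :=
    (ENNReal.le_div_iff_mul_le (Or.inl hs0) (Or.inl ENNReal.ofReal_ne_top)).2
      (by rwa [mul_comm])
  calc H = (H ^ (1 / p)) ^ p := by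
        rw [← ENNReal.rpow_mul, one_div, inv_mul_cancel₀ hp.ne', ENNReal.rpow_one]
    _ ≤ _ := ENNReal.rpow_le_rpow h2 hp.le

theorem levelset_subset {q : ℝ} (hq : 0 < q) (f : (Fin n → ℝ) → ℝ) (Q : Set (Fin n → ℝ))
    {t : ℝ} (ht : 0 < t) :
    {x | ENNReal.ofReal t < Q.indicator (fun x => ENNReal.ofReal |f x| ^ q) x} ⊆
      Q ∩ {x | ENNReal.ofReal (t ^ (1 / q)) < ENNReal.ofReal |f x|} := by
  intro x hx
  by_cases hxQ : x ∈ Q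
  · refine ⟨hxQ, ?_⟩
    rw [Set.mem_setOf_eq, Set.indicator_of_mem hxQ] at hx
    have h2 := ENNReal.rpow_lt_rpow hx (by positivity : 0 < 1 / q)
    rw [← ENNReal.rpow_mul, mul_one_div_cancel hq.ne', ENNReal.rpow_one] at h2
    rwa [Set.mem_setOf_eq, ← ENNReal.ofReal_rpow_of_pos ht]
  · exfalso
    rw [Set.mem_setOf_eq, Set.indicator_of_notMem hxQ] at hx
    exact (by simp : ¬ ENNReal.ofReal t < 0) hx


theorem key_real {d p q l Wr A B T : ℝ} (hq : 0 < q) (hqp : q < p) (hl : 0 < l)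
    (hWr : 0 < Wr) (hA : A = l ^ d) (hB : B = Wr ^ p) (hT : T = (B / A) ^ (p / q)⁻¹) :
    l ^ (d / p - d / q) * (A * T + B * (T ^ (1 - p / q) / (p / q - 1))) ^ (1 / q)
      = (p / q / (p / q - 1)) ^ (1 / q) * Wr := by
  have hp : 0 < p := hq.trans hqp
  set r : ℝ := p / q with hr
  have hr1 : 1 < r := (one_lt_div hq).2 hqp
  have hr0 : 0 < r := zero_lt_one.trans hr1
  have hrs : 0 < r - 1 := sub_pos.2 hr1
  have hApos : 0 < A := hA ▸ Real.rpow_pos_of_pos hl d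
  have hBpos : 0 < B := hB ▸ Real.rpow_pos_of_pos hWr p
  have hTpos : 0 < T := hT ▸ Real.rpow_pos_of_pos (div_pos hBpos hApos) _
  have hTr : T ^ r = B / A := by
    rw [hT, ← Real.rpow_mul (div_pos hBpos hApos).le, inv_mul_cancel₀ hr0.ne',
      Real.rpow_one]
  have hBT : B * T ^ (1 - r) = A * T := by
    rw [sub_eq_add_neg, Real.rpow_add hTpos, Real.rpow_one, Real.rpow_neg hTpos.le, hTr]
    field_simp
  have hS : A * T + B * (T ^ (1 - r) / (r - 1)) = r / (r - 1) * (A * T) := by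
    rw [mul_div_assoc'] at *
    rw [hBT]
    field_simp
    ring
  have hAT : A * T = l ^ (d - d * q / p) * Wr ^ q := by
    have h1 : T = Wr ^ q / l ^ (d * (q / p)) := by
      rw [hT, hA, hB, Real.div_rpow (Real.rpow_pos_of_pos hWr p).le
        (Real.rpow_pos_of_pos hl d).le, ← Real.rpow_mul hWr.le, ← Real.rpow_mul hl.le, hr]
      congr 2
      · field_simp
      · rw [inv_div]
    rw [hA, h1, Real.rpow_sub hl]
    field_simp
  rw [hS, hAT]
  have e1 : (r / (r - 1) * (l ^ (d - d * q / p) * Wr ^ q)) ^ (1 / q)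
      = (r / (r - 1)) ^ (1 / q) * (l ^ ((d - d * q / p) / q) * Wr) := by
    rw [Real.mul_rpow (div_pos hr0 hrs).le (by positivity),
      Real.mul_rpow (Real.rpow_pos_of_pos hl _).le (by positivity),
      ← Real.rpow_mul hl.le, ← Real.rpow_mul hWr.le, mul_one_div_cancel hq.ne',
      Real.rpow_one, mul_one_div]
  rw [e1]
  have hE : l ^ (d / p - d / q) * l ^ ((d - d * q / p) / q) = 1 := by
    rw [← Real.rpow_add hl, show d / p - d / q + (d - d * q / p) / q = 0 by
      field_simp; ring, Real.rpow_zero]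
  calc l ^ (d / p - d / q) *
        ((r / (r - 1)) ^ (1 / q) * (l ^ ((d - d * q / p) / q) * Wr))
      = (r / (r - 1)) ^ (1 / q) *
        ((l ^ (d / p - d / q) * l ^ ((d - d * q / p) / q)) * Wr) := by ring
    _ = (r / (r - 1)) ^ (1 / q) * Wr := by rw [hE, one_mul]

end Aux

/-- (M2): `wL^p(H^d) ↪ 𝓜^p_q(H^d)` for `0 < q < p < ∞`. -/
theorem weak_embeds_morrey (n : ℕ) (d p q : ℝ)
    (hd : 0 < d) (hdn : d ≤ n) (hq : 0 < q) (hqp : q < p) :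
    ∃ C : ℝ, 0 < C ∧ ∀ f : (Fin n → ℝ) → ℝ, Measurable f →
      morreyNorm n d p q f ≤ ENNReal.ofReal C * weakChoquetLpNorm n d p f := by
  have hp : 0 < p := hq.trans hqp
  set r : ℝ := p / q with hr
  have hr1 : 1 < r := (one_lt_div hq).2 hqp
  have hr0 : 0 < r := zero_lt_one.trans hr1
  have hrs : 0 < r - 1 := sub_pos.2 hr1
  refine ⟨(r / (r - 1)) ^ (1 / q), Real.rpow_pos_of_pos (div_pos hr0 hrs) _, ?_⟩
  intro f _
  set g : (Fin n → ℝ) → ℝ≥0∞ := fun x => ENNReal.ofReal |f x| with hg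
  set W := weakChoquetLpNorm n d p f with hWdef
  have hWeq : weakNormE n d p g = W := rfl
  rw [morreyNorm, morreyNormE]
  refine iSup_le fun a => iSup_le fun l => iSup_le fun hl => ?_
  set Q := cubeSet n a l with hQ
  set F : (Fin n → ℝ) → ℝ≥0∞ := Q.indicator fun x => g x ^ q with hF
  have hlev1 : ∀ t : ℝ, 0 < t →
      hContent n d {x | ENNReal.ofReal t < F x} ≤ ENNReal.ofReal l ^ d := fun t ht =>
    (hContent_mono ((levelset_subset hq f Q ht).trans Set.inter_subset_left)).trans
      (hContent_cube_le hd a l)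
  have hlev2 : ∀ t : ℝ, 0 < t →
      hContent n d {x | ENNReal.ofReal t < F x} ≤ W ^ p * ENNReal.ofReal t ^ (-r) := by
    intro t ht
    have hs : (0 : ℝ) < t ^ (1 / q) := Real.rpow_pos_of_pos ht _
    have h1 := (hContent_mono (d := d) ((levelset_subset hq f Q ht).trans
      Set.inter_subset_right)).trans (hContent_level_le_weak (d := d) hp g hs)
    have heq : (weakNormE n d p g / ENNReal.ofReal (t ^ (1 / q))) ^ p
        = W ^ p * ENNReal.ofReal t ^ (-r) := by
      rw [hWeq, ← ENNReal.ofReal_rpow_of_pos ht, ENNReal.div_rpow_of_nonneg _ _ hp.le,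
        ← ENNReal.rpow_mul, div_eq_mul_inv, ← ENNReal.rpow_neg, one_div,
        show q⁻¹ * p = r by rw [hr]; field_simp]
    rwa [heq] at h1
  rcases eq_or_ne W ⊤ with hWtop | hWtop
  · rw [hWtop, ENNReal.mul_top (by positivity)]
    exact le_top
  rcases eq_or_ne W 0 with hW0 | hW0
  · have hIzero : choquetIntegral n d F = 0 := by
      rw [choquetIntegral]
      refine le_antisymm ?_ zero_le
      have hb : ∀ t ∈ Set.Ioi (0 : ℝ),
          hContent n d {x | ENNReal.ofReal t < F x} ≤ (fun _ => (0 : ℝ≥0∞)) t := by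
        intro t ht
        have h2 := hlev2 t ht
        rwa [hW0, ENNReal.zero_rpow_of_pos hp, zero_mul] at h2
      simpa using MeasureTheory.setLIntegral_mono measurable_const hb
    rw [hIzero, ENNReal.zero_rpow_of_pos (by positivity : (0 : ℝ) < 1 / q), mul_zero]
    exact zero_le
  -- main case : 0 < W < ∞
  set Wr := W.toReal with hWr
  have hWrpos : 0 < Wr := ENNReal.toReal_pos hW0 hWtop
  have hWof : ENNReal.ofReal Wr = W := ENNReal.ofReal_toReal hWtop
  set A : ℝ := l ^ d with hA
  have hApos : 0 < A := Real.rpow_pos_of_pos hl d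
  set B : ℝ := Wr ^ p with hB
  have hBpos : 0 < B := Real.rpow_pos_of_pos hWrpos p
  set T : ℝ := (B / A) ^ r⁻¹ with hT
  have hTpos : 0 < T := Real.rpow_pos_of_pos (div_pos hBpos hApos) _
  have hWpB : W ^ p = ENNReal.ofReal B := by
    rw [hB, ← hWof, ENNReal.ofReal_rpow_of_pos hWrpos]
  have hsplit : choquetIntegral n d F
      = (∫⁻ t in Set.Ioc 0 T, hContent n d {x | ENNReal.ofReal t < F x})
        + ∫⁻ t in Set.Ioi T, hContent n d {x | ENNReal.ofReal t < F x} := by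
    rw [choquetIntegral, ← Set.Ioc_union_Ioi_eq_Ioi hTpos.le,
      MeasureTheory.lintegral_union measurableSet_Ioi Set.Ioc_disjoint_Ioi_same]
  have hpart1 : (∫⁻ t in Set.Ioc 0 T, hContent n d {x | ENNReal.ofReal t < F x})
      ≤ ENNReal.ofReal (A * T) := by
    calc (∫⁻ t in Set.Ioc 0 T, hContent n d {x | ENNReal.ofReal t < F x})
        ≤ ∫⁻ _ in Set.Ioc (0 : ℝ) T, ENNReal.ofReal l ^ d :=
          MeasureTheory.setLIntegral_mono measurable_const fun t ht => hlev1 t ht.1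
      _ = ENNReal.ofReal l ^ d * ENNReal.ofReal T := by
          rw [MeasureTheory.setLIntegral_const, Real.volume_Ioc, sub_zero]
      _ = ENNReal.ofReal (A * T) := by
          rw [ENNReal.ofReal_rpow_of_pos hl, ← hA, ← ENNReal.ofReal_mul hApos.le]
  have hpart2 : (∫⁻ t in Set.Ioi T, hContent n d {x | ENNReal.ofReal t < F x})
      ≤ ENNReal.ofReal (B * (T ^ (1 - r) / (r - 1))) := by
    have hb : ∀ t ∈ Set.Ioi T, hContent n d {x | ENNReal.ofReal t < F x}
        ≤ ENNReal.ofReal (B * t ^ (-r)) := by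
      intro t ht
      have ht0 : (0 : ℝ) < t := hTpos.trans ht
      have h2 := hlev2 t ht0
      rwa [hWpB, ENNReal.ofReal_rpow_of_pos ht0,
        ← ENNReal.ofReal_mul hBpos.le] at h2
    have hmeas : Measurable fun t : ℝ => ENNReal.ofReal (B * t ^ (-r)) := by
      fun_prop
    have step1 := MeasureTheory.setLIntegral_mono (μ := MeasureTheory.volume) hmeas hb
    have hint : MeasureTheory.IntegrableOn (fun t : ℝ => B * t ^ (-r)) (Set.Ioi T) :=
      (integrableOn_Ioi_rpow_of_lt (by linarith) hTpos).const_mul B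
    have hnn : 0 ≤ᵐ[MeasureTheory.volume.restrict (Set.Ioi T)]
        fun t : ℝ => B * t ^ (-r) := by
      filter_upwards [MeasureTheory.ae_restrict_mem measurableSet_Ioi] with t ht
      exact mul_nonneg hBpos.le (Real.rpow_nonneg (hTpos.trans ht).le _)
    have step2 : (∫⁻ t in Set.Ioi T, ENNReal.ofReal (B * t ^ (-r)))
        = ENNReal.ofReal (∫ t in Set.Ioi T, B * t ^ (-r)) :=
      (MeasureTheory.ofReal_integral_eq_lintegral_ofReal hint hnn).symm
    have hval : (∫ t in Set.Ioi T, B * t ^ (-r)) = B * (T ^ (1 - r) / (r - 1)) := by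
      rw [MeasureTheory.integral_const_mul, integral_Ioi_rpow_of_lt (by linarith) hTpos]
      congr 1
      rw [show -r + 1 = 1 - r by ring, neg_div, ← div_neg, neg_sub]
    rw [hval] at step2
    exact step1.trans step2.le
  have hIle : choquetIntegral n d F
      ≤ ENNReal.ofReal (A * T + B * (T ^ (1 - r) / (r - 1))) := by
    rw [hsplit, ENNReal.ofReal_add (by positivity)
      (by positivity : (0:ℝ) ≤ B * (T ^ (1 - r) / (r - 1)))]
    exact add_le_add hpart1 hpart2
  have hSpos : 0 < A * T + B * (T ^ (1 - r) / (r - 1)) := by positivity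
  calc ENNReal.ofReal (l ^ (d / p - d / q)) * choquetIntegral n d F ^ (1 / q)
      ≤ ENNReal.ofReal (l ^ (d / p - d / q)) *
        ENNReal.ofReal (A * T + B * (T ^ (1 - r) / (r - 1))) ^ (1 / q) :=
        mul_le_mul_right (ENNReal.rpow_le_rpow hIle (by positivity)) _
    _ = ENNReal.ofReal (l ^ (d / p - d / q) *
          (A * T + B * (T ^ (1 - r) / (r - 1))) ^ (1 / q)) := by
        rw [ENNReal.ofReal_rpow_of_pos hSpos,
          ← ENNReal.ofReal_mul (Real.rpow_pos_of_pos hl _).le]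
    _ = ENNReal.ofReal ((r / (r - 1)) ^ (1 / q) * Wr) := by
        rw [key_real hq hqp hl hWrpos hA hB (by rw [hT, hr])]
    _ = ENNReal.ofReal ((r / (r - 1)) ^ (1 / q)) * W := by
        rw [ENNReal.ofReal_mul (Real.rpow_pos_of_pos (div_pos hr0 hrs) _).le, hWof]


end
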